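/- Let Λ be a nonempty finite set and, for each n ∈ Λ, let c_n be a nonnegative integer. If s(∑_{n∈Λ} 2^(c_n)) = 1, then for all n, m ∈ Λ one has |c_n − c_m| ≤ max{0, Card(Λ) − 2}, where Card denotes cardinality. -/

import Mathlib

/-- `s n` is the number of nonzero digits (ones) in the binary expansion of `n`. -/
def s (n : ℕ) : ℕ := (Nat.digits 2 n).count 1

lemma count_one_digits_zero {m : ℕ} (h : (Nat.digits 2 m).count 1 = 0) : m = 0 := by
  by_contra hm
  have hne : Nat.digits 2 m ≠ [] := Nat.digits_ne_nil_iff_ne_zero.mpr hm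
  have hlast := Nat.getLast_digit_ne_zero 2 hm
  have hmem : (Nat.digits 2 m).getLast hne ∈ Nat.digits 2 m := List.getLast_mem hne
  have hlt : (Nat.digits 2 m).getLast hne < 2 := Nat.digits_lt_base (by norm_num) hmem
  have h1 : (1 : ℕ) ∈ Nat.digits 2 m := by
    have : (Nat.digits 2 m).getLast hne = 1 := by omega
    rwa [this] at hmem
  have := List.count_pos_iff.mpr h1
  omega

lemma s_eq_one_pow {n : ℕ} (h : s n = 1) : ∃ t, n = 2 ^ t := by
  induction n using Nat.strong_induction_on with
  | _ n ih =>
    rcases Nat.eq_zero_or_pos n with rfl | hn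
    · simp [s] at h
    · have hd : Nat.digits 2 n = n % 2 :: Nat.digits 2 (n / 2) :=
        Nat.digits_def' (by norm_num) hn
      unfold s at h
      rw [hd] at h
      rcases Nat.mod_two_eq_zero_or_one n with h2 | h2
      · rw [h2] at h
        have hcount : s (n / 2) = 1 := by
          unfold s; simpa using h
        obtain ⟨t, ht⟩ := ih (n / 2) (Nat.div_lt_self hn (by norm_num)) hcount
        exact ⟨t + 1, by omega⟩
      · rw [h2] at h
        have hcount : (Nat.digits 2 (n / 2)).count 1 = 0 := by
          simp [List.count_cons] at h
          omega
        have := count_one_digits_zero hcount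
        exact ⟨0, by omega⟩

lemma multiset_key : ∀ k (M : Multiset ℕ), Multiset.card M = k →
    (∃ t, (M.map (fun x => 2 ^ x)).sum = 2 ^ t) →
    ∀ a ∈ M, ∀ b ∈ M, b ≤ a + (k - 2) := by
  intro k
  induction k using Nat.strong_induction_on with
  | _ k ih =>
    rintro M hcard ⟨t, ht⟩ a ha b hb
    -- minimum element
    have hMne : M ≠ 0 := fun h => by simp [h] at ha
    obtain ⟨m, hmM, hmin⟩ : ∃ m ∈ M, ∀ x ∈ M, m ≤ x := by
      have hne : M.toFinset.Nonempty := by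
        exact ⟨a, Multiset.mem_toFinset.mpr ha⟩
      refine ⟨M.toFinset.min' hne, Multiset.mem_toFinset.mp (M.toFinset.min'_mem hne), ?_⟩
      intro x hx
      exact M.toFinset.min'_le x (Multiset.mem_toFinset.mpr hx)
    rcases Nat.lt_or_ge k 2 with hk2 | hk2
    · -- k ≤ 1, so M = {a} and a = b
      interval_cases k
      · simp at hcard; exact absurd hcard hMne
      · obtain ⟨x, rfl⟩ := Multiset.card_eq_one.mp hcard
        simp at ha hb
        omega
    · -- k ≥ 2 : every element ≥ 2^m, sum ≥ 2 * 2^m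
      have hterm : ∀ y ∈ M.map (fun x => 2 ^ x), 2 ^ m ≤ y := by
        intro y hy
        obtain ⟨x, hx, rfl⟩ := Multiset.mem_map.mp hy
        exact Nat.pow_le_pow_right (by norm_num) (hmin x hx)
      have hsum_ge : 2 ^ m * k ≤ (M.map (fun x => 2 ^ x)).sum := by
        have := Multiset.card_nsmul_le_sum hterm
        simpa [Multiset.card_map, hcard, mul_comm, Nat.nsmul_eq_mul] using this
      have htm : m + 1 ≤ t := by
        by_contra hc
        have h1 : t ≤ m := by omega
        have h2 : (2:ℕ) ^ t ≤ 2 ^ m := Nat.pow_le_pow_right (by norm_num) h1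
        have h3 : 2 ^ m * 2 ≤ 2 ^ m * k := Nat.mul_le_mul_left _ hk2
        have h4 : (0:ℕ) < 2 ^ m := Nat.pow_pos (by norm_num)
        omega
      -- factor out 2^m
      set S : ℕ := (M.map (fun x => 2 ^ (x - m))).sum with hS
      have hfac : (M.map (fun x => 2 ^ x)).sum = 2 ^ m * S := by
        rw [hS, ← Multiset.sum_map_mul_left]
        congr 1
        apply Multiset.map_congr rfl
        intro x hx
        rw [← pow_add]
        congr 1
        have := hmin x hx
        omega
      have hSval : S = 2 ^ (t - m) := by
        have h4 : (0:ℕ) < 2 ^ m := Nat.pow_pos (by norm_num)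
        have : 2 ^ m * S = 2 ^ m * 2 ^ (t - m) := by
          rw [← hfac, ht, ← pow_add]
          congr 1
          omega
        exact Nat.eq_of_mul_eq_mul_left h4 this
      have hSeven : 2 ∣ S := by
        rw [hSval]
        exact dvd_pow_self 2 (by omega)
      -- S ≡ count m mod 2
      have hcnt_even : 2 ∣ M.count m := by
        have hsplit : M = M.filter (m = ·) + M.filter (fun x => ¬ (m = x)) :=
          (Multiset.filter_add_not _ M).symm
        have hS2 : S = ((M.filter (m = ·)).map (fun x => 2 ^ (x - m))).sum +
            ((M.filter (fun x => ¬ (m = x))).map (fun x => 2 ^ (x - m))).sum := by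
          rw [hS]
          conv_lhs => rw [hsplit]
          rw [Multiset.map_add, Multiset.sum_add]
        have hfirst : ((M.filter (m = ·)).map (fun x => 2 ^ (x - m))).sum = M.count m := by
          rw [Multiset.count_eq_card_filter_eq]
          have : (M.filter (m = ·)).map (fun x => 2 ^ (x - m)) =
              (M.filter (m = ·)).map (fun _ => 1) := by
            apply Multiset.map_congr rfl
            intro x hx
            have := (Multiset.mem_filter.mp hx).2
            subst this
            simp
          rw [this]
          simp [Multiset.map_const]
        have hsecond : 2 ∣ ((M.filter (fun x => ¬ (m = x))).map (fun x => 2 ^ (x - m))).sum := by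
          apply Multiset.dvd_sum
          intro y hy
          obtain ⟨x, hx, rfl⟩ := Multiset.mem_map.mp hy
          have hx1 := Multiset.mem_filter.mp hx
          have hxm : m < x := lt_of_le_of_ne (hmin x (Multiset.mem_of_mem_filter hx)) hx1.2
          exact ⟨2 ^ (x - m - 1), by rw [← pow_succ']; congr 1; omega⟩
        omega
      have hcnt2 : 2 ≤ M.count m := by
        have := Multiset.count_pos.mpr hmM
        omega
      -- build M'
      set M2 := (M.erase m).erase m with hM2
      have hmem1 : m ∈ M.erase m := by
        rw [← Multiset.count_pos, Multiset.count_erase_self]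
        omega
      have hMeq : M = m ::ₘ m ::ₘ M2 := by
        rw [hM2, Multiset.cons_erase hmem1, Multiset.cons_erase hmM]
      set M' := (m + 1) ::ₘ M2 with hM'
      have hcard' : Multiset.card M' = k - 1 := by
        have : Multiset.card M = Multiset.card M2 + 2 := by
          rw [hMeq]; simp
        rw [hM']
        simp
        omega
      have hsum' : (M'.map (fun x => 2 ^ x)).sum = 2 ^ t := by
        rw [← ht, hM']
        conv_rhs => rw [hMeq]
        simp [Multiset.map_cons, Multiset.sum_cons]
        ring
      have ihM' := ih (k - 1) (by omega) M' hcard' ⟨t, hsum'⟩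
      rcases eq_or_ne b m with rfl | hbm
      · have := hmin a ha
        omega
      · have hbM2 : b ∈ M2 := by
          rw [hM2, Multiset.mem_erase_of_ne hbm, Multiset.mem_erase_of_ne hbm]
          exact hb
        have hbM' : b ∈ M' := by
          rw [hM']; exact Multiset.mem_cons_of_mem hbM2
        have hmM' : (m + 1) ∈ M' := by
          rw [hM']; exact Multiset.mem_cons_self _ _
        have hk3 : 3 ≤ k := by
          have : Multiset.card M = Multiset.card M2 + 2 := by
            rw [hMeq]; simp
          have : 0 < Multiset.card M2 := Multiset.card_pos.mpr (fun h => by simp [h] at hbM2)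
          omega
        have hb_le := ihM' (m + 1) hmM' b hbM'
        have ham := hmin a ha
        omega

theorem key_lemma {α : Type*} (Λ : Finset α) (hΛ : Λ.Nonempty) (c : α → ℕ)
    (h : s (∑ n ∈ Λ, 2 ^ c n) = 1) :
    ∀ n ∈ Λ, ∀ m ∈ Λ, |(c n : ℤ) - (c m : ℤ)| ≤ max 0 ((Λ.card : ℤ) - 2) := by
  intro n hn m hm
  obtain ⟨t, ht⟩ := s_eq_one_pow h
  have hsum : ((Λ.val.map c).map (fun x => 2 ^ x)).sum = 2 ^ t := by
    rw [Multiset.map_map]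
    exact ht
  have hkey := multiset_key Λ.card (Λ.val.map c) (by rw [Multiset.card_map]; rfl) ⟨t, hsum⟩
  have hcn : c n ∈ Λ.val.map c := Multiset.mem_map_of_mem c hn
  have hcm : c m ∈ Λ.val.map c := Multiset.mem_map_of_mem c hm
  have h1 := hkey (c n) hcn (c m) hcm
  have h2 := hkey (c m) hcm (c n) hcn
  have hcard : 1 ≤ Λ.card := Finset.card_pos.mpr hΛ
  rw [abs_sub_le_iff]
  constructor <;>
  · rcases le_total ((Λ.card : ℤ) - 2) 0 with hc | hc
    · rw [max_eq_left hc]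
      omega
    · rw [max_eq_right hc]
      omega
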